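/- A Tychonoff space X is sequentially Ascoli if, and only if, each function Φ : X × 𝐬 → ℝ that is separately continuous and k-continuous is continuous, where 𝐬 = {1/n : n ∈ ℕ, n ≥ 1} ∪ {0} carries the topology induced from ℝ. -/

import Mathlib

open Set Filter Topology

/-- A set `H` of continuous real-valued functions is equicontinuous. -/
def EquicontinuousSet {X : Type*} [TopologicalSpace X] (H : Set C(X, ℝ)) : Prop :=
  ∀ x : X, ∀ ε : ℝ, 0 < ε → ∃ U ∈ 𝓝 x, ∀ x' ∈ U, ∀ f ∈ H, |f x' - f x| < ε

/-- `X` is Ascoli: every compact subset of `C_k(X)` is equicontinuous. -/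
def AscoliSpace (X : Type*) [TopologicalSpace X] : Prop :=
  ∀ K : Set C(X, ℝ), IsCompact K → EquicontinuousSet K

/-- `X` is sequentially Ascoli: every convergent sequence in `C_k(X)` is equicontinuous. -/
def SeqAscoliSpace (X : Type*) [TopologicalSpace X] : Prop :=
  ∀ (f : ℕ → C(X, ℝ)) (g : C(X, ℝ)), Tendsto f atTop (𝓝 g) →
    EquicontinuousSet (Set.range f ∪ {g})

/-- A function is `k`-continuous if its restriction to every compact subset is continuous. -/
def KContinuous {X Y : Type*} [TopologicalSpace X] [TopologicalSpace Y] (f : X → Y) : Prop :=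
  ∀ K : Set X, IsCompact K → ContinuousOn f K

/-- `X` is a `k_ℝ`-space if every `k`-continuous real-valued function is continuous. -/
def KRSpace (X : Type*) [TopologicalSpace X] : Prop :=
  ∀ f : X → ℝ, KContinuous f → Continuous f

/-- `X` is an `s_ℝ`-space if every sequentially continuous real-valued function is continuous. -/
def SRSpace (X : Type*) [TopologicalSpace X] : Prop :=
  ∀ f : X → ℝ, SeqContinuous f → Continuous f

/-- A function on a product is separately continuous. -/
def SeparatelyContinuous {X K : Type*} [TopologicalSpace X] [TopologicalSpace K]
    (Φ : X × K → ℝ) : Prop :=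
  (∀ x : X, Continuous fun k => Φ (x, k)) ∧ (∀ k : K, Continuous fun x => Φ (x, k))

/-- `X` is pseudocompact: every continuous real-valued function on `X` is bounded. -/
def Pseudocompact (X : Type*) [TopologicalSpace X] : Prop :=
  ∀ f : X → ℝ, Continuous f → ∃ M : ℝ, ∀ x : X, |f x| ≤ M

/-- A subset `A` of `X` is functionally bounded if every continuous real-valued
function on `X` is bounded on `A`. -/
def FunctionallyBounded {X : Type*} [TopologicalSpace X] (A : Set X) : Prop :=
  ∀ f : X → ℝ, Continuous f → ∃ M : ℝ, ∀ a ∈ A, |f a| ≤ M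

/-- An `R`-quotient map: a continuous surjection such that real-valued functions on the
codomain are continuous as soon as their composition with the map is continuous. -/
def RQuotientMap {X Y : Type*} [TopologicalSpace X] [TopologicalSpace Y] (p : X → Y) : Prop :=
  Continuous p ∧ Function.Surjective p ∧ ∀ φ : Y → ℝ, Continuous (φ ∘ p) → Continuous φ

/-- The convergent sequence $\mathbf{s} = \{1/n : n ≥ 1\} ∪ \{0\}$ with the topology
induced from ℝ. -/
def convSeq : Set ℝ := insert 0 {r : ℝ | ∃ n : ℕ, r = 1 / (n + 1)}

namespace SeqAscoliAux


noncomputable section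

def seqPt (n : ℕ) : ↥convSeq := ⟨1 / (n + 1), Set.mem_insert_iff.mpr (Or.inr ⟨n, rfl⟩)⟩

def zeroPt : ↥convSeq := ⟨0, Set.mem_insert _ _⟩

def idx (k : ↥convSeq) : ℕ := ⌈((k : ℝ))⁻¹⌉₊ - 1

lemma coe_seqPt (n : ℕ) : (seqPt n : ℝ) = 1 / (n + 1) := rfl

lemma coe_zeroPt : (zeroPt : ℝ) = 0 := rfl

lemma seqPt_pos (n : ℕ) : (0:ℝ) < (seqPt n : ℝ) := by
  rw [coe_seqPt]; positivity

lemma seqPt_ne_zeroPt (n : ℕ) : seqPt n ≠ zeroPt := by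
  intro h
  have := seqPt_pos n
  rw [h, coe_zeroPt] at this
  exact lt_irrefl _ this

lemma idx_seqPt (n : ℕ) : idx (seqPt n) = n := by
  have : ((seqPt n : ℝ))⁻¹ = ((n + 1 : ℕ) : ℝ) := by
    rw [coe_seqPt, one_div, inv_inv]; push_cast; ring
  rw [idx, this, Nat.ceil_natCast]
  omega

lemma cases_convSeq (k : ↥convSeq) : k = zeroPt ∨ k = seqPt (idx k) := by
  obtain ⟨r, hr⟩ := k
  rcases Set.mem_insert_iff.mp hr with h | ⟨n, hn⟩
  · left; exact Subtype.ext h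
  · right
    have e : (⟨r, hr⟩ : ↥convSeq) = seqPt n := Subtype.ext hn
    rw [e, idx_seqPt]

lemma finite_tail {c : ℝ} (hc : 0 < c) : Set.Finite {k : ↥convSeq | c < (k : ℝ)} := by
  have h1 : {k : ↥convSeq | c < (k : ℝ)} ⊆ seqPt '' (Set.Iio ⌈1 / c⌉₊) := by
    intro k hk
    rcases cases_convSeq k with rfl | hk2
    · exfalso
      rw [Set.mem_setOf_eq, coe_zeroPt] at hk
      linarith
    · refine ⟨idx k, ?_, hk2.symm⟩
      rw [Set.mem_Iio, Nat.lt_ceil]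
      rw [Set.mem_setOf_eq, hk2, coe_seqPt] at hk
      have h2 : c * ((idx k : ℝ) + 1) < 1 := by
        rw [lt_div_iff₀ (by positivity)] at hk
        linarith
      rw [lt_div_iff₀ hc]
      nlinarith
  exact Set.Finite.subset (Set.Finite.image _ (Set.finite_Iio _)) h1

lemma isOpen_singleton_seqPt (n : ℕ) : IsOpen ({seqPt n} : Set ↥convSeq) := by
  set V : Set ↥convSeq := {k | (1:ℝ) / (n + 2) < (k : ℝ)} with hV
  have hVopen : IsOpen V := isOpen_Ioi.preimage continuous_subtype_val
  have hVfin : V.Finite := finite_tail (by positivity)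
  have hmem : seqPt n ∈ V := by
    rw [hV, Set.mem_setOf_eq, coe_seqPt]
    apply one_div_lt_one_div_of_lt (by positivity)
    linarith
  have key : ({seqPt n} : Set ↥convSeq) = V ∩ (V \ {seqPt n})ᶜ := by
    ext k
    simp only [Set.mem_singleton_iff, Set.mem_inter_iff, Set.mem_compl_iff, Set.mem_diff,
      not_and, not_not]
    constructor
    · rintro rfl; exact ⟨hmem, fun _ => rfl⟩
    · rintro ⟨hkV, h⟩; exact h hkV
  rw [key]
  exact hVopen.inter (hVfin.diff (t := {seqPt n})).isClosed.isOpen_compl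

lemma mem_nhds_zeroPt (N : ℕ) : {k : ↥convSeq | (k : ℝ) < 1 / (N + 1)} ∈ 𝓝 zeroPt := by
  apply IsOpen.mem_nhds (isOpen_Iio.preimage continuous_subtype_val)
  show (zeroPt : ℝ) ∈ Set.Iio _
  rw [Set.mem_Iio, coe_zeroPt]
  positivity

lemma eq_of_lt (k : ↥convSeq) (N : ℕ) (h : (k : ℝ) < 1 / (N + 1)) :
    k = zeroPt ∨ ∃ m, N ≤ m ∧ k = seqPt m := by
  rcases cases_convSeq k with rfl | hk
  · exact Or.inl rfl
  · refine Or.inr ⟨idx k, ?_, hk⟩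
    rw [hk, coe_seqPt] at h
    rw [div_lt_div_iff₀ (by positivity) (by positivity)] at h
    have : (N : ℝ) < (idx k : ℝ) := by linarith
    exact_mod_cast this.le

lemma tendsto_seqPt : Tendsto seqPt atTop (𝓝 zeroPt) :=
  tendsto_subtype_rng.mpr tendsto_one_div_add_atTop_nhds_zero_nat

instance : CompactSpace ↥convSeq := isCompact_iff_compactSpace.mp <| by
  have h : convSeq = insert 0 (Set.range fun n : ℕ => 1 / ((n : ℝ) + 1)) := by
    unfold convSeq
    congr 1
    ext r
    simp [Set.mem_range, eq_comm]
  rw [h]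
  exact tendsto_one_div_add_atTop_nhds_zero_nat.isCompact_insert_range


noncomputable def phi {X : Type*} (f : ℕ → X → ℝ) (g : X → ℝ) (p : X × ↥convSeq) : ℝ :=
  if p.2 = zeroPt then g p.1 else f (idx p.2) p.1

lemma phi_zero {X : Type*} (f : ℕ → X → ℝ) (g : X → ℝ) (x : X) :
    phi f g (x, zeroPt) = g x := if_pos rfl

lemma phi_seq {X : Type*} (f : ℕ → X → ℝ) (g : X → ℝ) (x : X) (n : ℕ) :
    phi f g (x, seqPt n) = f n x := by
  rw [phi, if_neg (seqPt_ne_zeroPt n)]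
  simp [idx_seqPt]

lemma contOn_phi {X : Type*} [TopologicalSpace X] (f : ℕ → X → ℝ) (g : X → ℝ) (S : Set X)
    (hf : ∀ n, ContinuousOn (f n) S) (hg : ContinuousOn g S)
    (hu : TendstoUniformlyOn (fun n x => f n x) g atTop S) :
    ContinuousOn (phi f g) (S ×ˢ (univ : Set ↥convSeq)) := by
  rintro ⟨x, k⟩ ⟨hxS, -⟩
  rcases cases_convSeq k with rfl | hk
  · -- at (x, zeroPt)
    rw [ContinuousWithinAt, phi_zero, Metric.tendsto_nhds]
    intro ε hε
    obtain ⟨N, hN⟩ := eventually_atTop.mp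
      ((Metric.tendstoUniformlyOn_iff.mp hu) (ε / 3) (by linarith))
    have hgx : ∀ᶠ y in 𝓝[S] x, dist (g y) (g x) < ε / 3 :=
      Metric.tendsto_nhds.mp (hg x hxS) (ε / 3) (by linarith)
    have hS : S ∈ 𝓝[S] x := self_mem_nhdsWithin
    have hVmem : {k : ↥convSeq | (k : ℝ) < 1 / (N + 1)} ∈ 𝓝[(univ : Set ↥convSeq)] zeroPt := by
      rw [nhdsWithin_univ]; exact mem_nhds_zeroPt N
    rw [nhdsWithin_prod_eq]
    filter_upwards [Filter.prod_mem_prod (hgx.and hS) hVmem] with p hp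
    obtain ⟨⟨hp1, hp2⟩, hp3⟩ := hp
    rcases eq_of_lt p.2 N hp3 with h0 | ⟨m, hm, hms⟩
    · have : phi f g p = g p.1 := by rw [show p = (p.1, p.2) from rfl, h0, phi_zero]
      rw [this]
      linarith
    · have hval : phi f g p = f m p.1 := by rw [show p = (p.1, p.2) from rfl, hms, phi_seq]
      rw [hval]
      have h1 : dist (g p.1) (f m p.1) < ε / 3 := hN m hm p.1 hp2
      calc dist (f m p.1) (g x) ≤ dist (f m p.1) (g p.1) + dist (g p.1) (g x) := dist_triangle _ _ _
        _ < ε := by rw [dist_comm (f m p.1)]; linarith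
  · -- at (x, seqPt n)
    set n := idx k with hn
    have hcw : ContinuousWithinAt (fun p : X × ↥convSeq => f n p.1) (S ×ˢ univ) (x, k) :=
      (hf n x hxS).comp continuous_fst.continuousWithinAt (fun p hp => hp.1)
    apply hcw.congr_of_eventuallyEq
    · have hopen : (univ ×ˢ {seqPt n} : Set (X × ↥convSeq)) ∈ 𝓝 (x, k) := by
        rw [hk]
        exact (isOpen_univ.prod (isOpen_singleton_seqPt n)).mem_nhds ⟨trivial, rfl⟩
      filter_upwards [mem_nhdsWithin_of_mem_nhds hopen] with p hp
      rw [show p = (p.1, p.2) from rfl, hp.2, phi_seq]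
    · rw [hk, phi_seq]


end
end SeqAscoliAux

open SeqAscoliAux in
theorem seqAscoli_iff_separatelyContinuous_kContinuous_continuous
    {X : Type*} [TopologicalSpace X] [T35Space X] :
    SeqAscoliSpace X ↔
      ∀ Φ : X × ↥convSeq → ℝ, SeparatelyContinuous Φ → KContinuous Φ → Continuous Φ := by
  constructor
  · -- ⇒
    rintro hSA Φ ⟨hsep1, hsep2⟩ hKc
    set f : ℕ → C(X, ℝ) := fun n => ⟨fun x => Φ (x, seqPt n), hsep2 _⟩ with hf
    set g : C(X, ℝ) := ⟨fun x => Φ (x, zeroPt), hsep2 _⟩ with hg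
    have htd : Tendsto f atTop (𝓝 g) := by
      rw [ContinuousMap.tendsto_iff_forall_isCompact_tendstoUniformlyOn]
      intro K hK
      haveI := isCompact_iff_compactSpace.mp hK
      have hΦK : ContinuousOn Φ (K ×ˢ (univ : Set ↥convSeq)) :=
        hKc _ (hK.prod isCompact_univ)
      have hΨ : Continuous (fun q : ↥convSeq × ↥K => Φ ((q.2 : X), q.1)) := by
        apply hΦK.comp_continuous
        · exact ((continuous_subtype_val.comp continuous_snd).prodMk continuous_fst)
        · exact fun q => ⟨q.2.2, trivial⟩
      set G : C(↥convSeq, C(↥K, ℝ)) := ContinuousMap.curry ⟨_, hΨ⟩ with hG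
      have htd2 : Tendsto (fun n => G (seqPt n)) atTop (𝓝 (G zeroPt)) :=
        ((G.continuous.tendsto _).comp tendsto_seqPt)
      have hun : TendstoUniformlyOn (fun n (a : ↥K) => G (seqPt n) a) (⇑(G zeroPt))
          atTop (univ : Set ↥K) :=
        ContinuousMap.tendsto_iff_forall_isCompact_tendstoUniformlyOn.mp htd2 univ isCompact_univ
      rw [tendstoUniformlyOn_univ] at hun
      rw [tendstoUniformlyOn_iff_tendstoUniformly_comp_coe]
      exact hun
    have hequi := hSA f g htd
    rw [continuous_iff_continuousAt]
    rintro ⟨x, k⟩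
    rcases cases_convSeq k with rfl | hk
    · -- continuity at (x, zeroPt)
      rw [ContinuousAt, Metric.tendsto_nhds]
      intro ε hε
      obtain ⟨U, hU, hUe⟩ := hequi x (ε / 2) (by linarith)
      have hx0 : {k' : ↥convSeq | dist (Φ (x, k')) (Φ (x, zeroPt)) < ε / 2} ∈ 𝓝 zeroPt := by
        have := Metric.tendsto_nhds.mp ((hsep1 x).tendsto zeroPt) (ε / 2) (by linarith)
        exact this
      rw [nhds_prod_eq]
      filter_upwards [Filter.prod_mem_prod hU hx0] with p hp
      obtain ⟨hp1, hp2⟩ := hp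
      have key : dist (Φ (p.1, p.2)) (Φ (x, p.2)) < ε / 2 := by
        rcases cases_convSeq p.2 with h0 | hs
        · rw [h0]
          have := hUe p.1 hp1 g (Or.inr rfl)
          simpa [hg, Real.dist_eq] using this
        · rw [hs]
          have := hUe p.1 hp1 (f (idx p.2)) (Or.inl ⟨idx p.2, rfl⟩)
          simpa [hf, Real.dist_eq] using this
      calc dist (Φ p) (Φ (x, zeroPt))
          ≤ dist (Φ (p.1, p.2)) (Φ (x, p.2)) + dist (Φ (x, p.2)) (Φ (x, zeroPt)) :=
            dist_triangle _ _ _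
        _ < ε := by
            have : dist (Φ (x, p.2)) (Φ (x, zeroPt)) < ε / 2 := hp2
            linarith
    · -- continuity at (x, seqPt n)
      set n := idx k with hn
      have hc : ContinuousAt (fun p : X × ↥convSeq => Φ (p.1, seqPt n)) (x, k) :=
        ((hsep2 (seqPt n)).comp continuous_fst).continuousAt
      apply hc.congr
      have hopen : (univ ×ˢ {seqPt n} : Set (X × ↥convSeq)) ∈ 𝓝 (x, k) := by
        rw [hk]
        exact (isOpen_univ.prod (isOpen_singleton_seqPt n)).mem_nhds ⟨trivial, rfl⟩
      filter_upwards [hopen] with p hp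
      rw [show p = (p.1, p.2) from rfl, hp.2]
  · -- ⇐
    intro h f g hfg
    have hu : ∀ K : Set X, IsCompact K →
        TendstoUniformlyOn (fun n x => f n x) (⇑g) atTop K :=
      ContinuousMap.tendsto_iff_forall_isCompact_tendstoUniformlyOn.mp hfg
    set Φ : X × ↥convSeq → ℝ := phi (fun n x => f n x) (⇑g) with hΦ
    have hsep : SeparatelyContinuous Φ := by
      constructor
      · intro x
        have hcon : ContinuousOn Φ (({x} : Set X) ×ˢ univ) := by
          apply contOn_phi
          · exact fun n => (f n).continuous.continuousOn
          · exact g.continuous.continuousOn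
          · exact hu {x} isCompact_singleton
        exact hcon.comp_continuous (continuous_const.prodMk continuous_id)
          (fun k => ⟨rfl, trivial⟩)
      · intro k
        rcases cases_convSeq k with rfl | hk
        · have : (fun x => Φ (x, zeroPt)) = ⇑g := by
            ext x; exact phi_zero _ _ x
          rw [this]; exact g.continuous
        · have : (fun x => Φ (x, k)) = ⇑(f (idx k)) := by
            ext x
            rw [hΦ]
            conv_lhs => rw [hk]
            exact phi_seq _ _ x (idx k)
          rw [this]; exact (f _).continuous
    have hKc : KContinuous Φ := by
      intro K hK
      have hC : IsCompact (Prod.fst '' K) := hK.image continuous_fst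
      have hcon : ContinuousOn Φ ((Prod.fst '' K) ×ˢ univ) := by
        apply contOn_phi
        · exact fun n => (f n).continuous.continuousOn
        · exact g.continuous.continuousOn
        · exact hu _ hC
      exact hcon.mono (fun p hp => ⟨⟨p, hp, rfl⟩, trivial⟩)
    have hcont : Continuous Φ := h Φ hsep hKc
    intro x ε hε
    have hca : ContinuousAt Φ (x, zeroPt) := hcont.continuousAt
    rw [ContinuousAt, Metric.tendsto_nhds] at hca
    have h3 := hca (ε / 3) (by linarith)
    rw [nhds_prod_eq] at h3
    obtain ⟨A, hA, B, hB, hAB⟩ := Filter.mem_prod_iff.mp h3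
    obtain ⟨N, hNB⟩ := eventually_atTop.mp (tendsto_seqPt hB)
    have hzB : zeroPt ∈ B := mem_of_mem_nhds hB
    have hxA : x ∈ A := mem_of_mem_nhds hA
    have hfin : ∀ᶠ y in 𝓝 x, ∀ m ∈ Finset.range N, dist (f m y) (f m x) < ε := by
      rw [eventually_all_finset]
      intro m _
      exact Metric.tendsto_nhds.mp ((f m).continuous.tendsto x) ε hε
    refine ⟨A ∩ {y | ∀ m ∈ Finset.range N, dist (f m y) (f m x) < ε},
      inter_mem hA hfin, ?_⟩
    rintro x' ⟨hx'A, hx'f⟩ h0 hh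
    have hΦz : Φ (x, zeroPt) = g x := phi_zero _ _ x
    rcases hh with ⟨m, rfl⟩ | hh0
    · rcases lt_or_ge m N with hmN | hmN
      · have := hx'f m (Finset.mem_range.mpr hmN)
        rw [Real.dist_eq] at this
        exact this
      · have h1 : dist (Φ (x', seqPt m)) (Φ (x, zeroPt)) < ε / 3 :=
          hAB ⟨hx'A, hNB m hmN⟩
        have h2 : dist (Φ (x, seqPt m)) (Φ (x, zeroPt)) < ε / 3 :=
          hAB ⟨hxA, hNB m hmN⟩
        rw [hΦ, phi_seq, phi_zero] at h1 h2
        rw [Real.dist_eq] at h1 h2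
        rw [abs_sub_lt_iff] at h1 h2 ⊢
        constructor <;> [linarith [h1.1, h2.2]; linarith [h1.2, h2.1]]
    · have hg0 : h0 = g := hh0
      subst hg0
      have h1 : dist (Φ (x', zeroPt)) (Φ (x, zeroPt)) < ε / 3 :=
        hAB ⟨hx'A, hzB⟩
      rw [hΦ, phi_zero, phi_zero, Real.dist_eq] at h1
      calc |h0 x' - h0 x| < ε / 3 := h1
        _ < ε := by linarith
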